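/- For AVRG with step size μ > 0, the backward inner difference in epoch t ≥ 1 satisfies Σ_{i=0}^{N−1} E‖w_N^t − w_i^t‖² ≤ 3μ²δ²N² Σ_{i=0}^{N−1} E‖w_i^t − w_0^t‖² + 3μ²δ²N² ( Σ_{i=0}^{N−1} E‖w_i^{t−1} − w_N^{t−1}‖² + N · E‖w̃_0^t‖² ). -/

import Mathlib

open MeasureTheory ProbabilityTheory Finset
open scoped RealInnerProductSpace ENNReal

/-- A function that is measurable and uniformly bounded. -/
def AvrgNice {M : ℕ} {Ω : Type} [MeasurableSpace Ω]
    (f : Ω → EuclideanSpace ℝ (Fin M)) : Prop :=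
  Measurable f ∧ ∃ C : ℝ, ∀ ω, ‖f ω‖ ≤ C

namespace AvrgNice

variable {M : ℕ} {Ω : Type} [MeasurableSpace Ω]

theorem const (c : EuclideanSpace ℝ (Fin M)) : AvrgNice (fun _ : Ω => c) :=
  ⟨measurable_const, ⟨‖c‖, fun _ => le_rfl⟩⟩

theorem add {f h : Ω → EuclideanSpace ℝ (Fin M)} (hf : AvrgNice f) (hh : AvrgNice h) :
    AvrgNice (fun ω => f ω + h ω) := by
  obtain ⟨mf, Cf, hCf⟩ := hf; obtain ⟨mh, Ch, hCh⟩ := hh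
  exact ⟨mf.add mh, ⟨Cf + Ch, fun ω =>
    (norm_add_le _ _).trans (add_le_add (hCf ω) (hCh ω))⟩⟩

theorem sub {f h : Ω → EuclideanSpace ℝ (Fin M)} (hf : AvrgNice f) (hh : AvrgNice h) :
    AvrgNice (fun ω => f ω - h ω) := by
  obtain ⟨mf, Cf, hCf⟩ := hf; obtain ⟨mh, Ch, hCh⟩ := hh
  exact ⟨mf.sub mh, ⟨Cf + Ch, fun ω =>
    (norm_sub_le _ _).trans (add_le_add (hCf ω) (hCh ω))⟩⟩

theorem smul (c : ℝ) {f : Ω → EuclideanSpace ℝ (Fin M)} (hf : AvrgNice f) :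
    AvrgNice (fun ω => c • f ω) := by
  obtain ⟨mf, Cf, hCf⟩ := hf
  refine ⟨mf.const_smul c, ⟨|c| * Cf, fun ω => ?_⟩⟩
  rw [norm_smul, Real.norm_eq_abs]
  exact mul_le_mul_of_nonneg_left (hCf ω) (abs_nonneg c)

theorem finset_sum {ι : Type*} (s : Finset ι) {f : ι → Ω → EuclideanSpace ℝ (Fin M)}
    (hf : ∀ i ∈ s, AvrgNice (f i)) : AvrgNice (fun ω => ∑ i ∈ s, f i ω) := by
  classical
  induction s using Finset.induction_on with
  | empty => simpa using const 0
  | @insert a s' hx ih =>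
    simp only [Finset.sum_insert hx]
    exact (hf a (Finset.mem_insert_self a s')).add
      (ih fun i hi => hf i (Finset.mem_insert_of_mem hi))

/-- Composition with a randomly selected Lipschitz gradient is nice. -/
theorem qg_comp {N : ℕ} (σ : Ω → Equiv.Perm (Fin N))
    (hσ : @Measurable Ω (Equiv.Perm (Fin N)) _ ⊤ σ)
    (Qg : Fin N → EuclideanSpace ℝ (Fin M) → EuclideanSpace ℝ (Fin M))
    (δ : ℝ) (hδ : 0 < δ)
    (hLip : ∀ n x y, ‖Qg n x - Qg n y‖ ≤ δ * ‖x - y‖)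
    (i : Fin N) {f : Ω → EuclideanSpace ℝ (Fin M)} (hf : AvrgNice f) :
    AvrgNice (fun ω => Qg (σ ω i) (f ω)) := by
  obtain ⟨mf, Cf, hCf⟩ := hf
  have hcont : ∀ n, Continuous (Qg n) := by
    intro n
    refine (LipschitzWith.of_dist_le_mul (K := δ.toNNReal) fun x y => ?_).continuous
    rw [dist_eq_norm, dist_eq_norm, Real.coe_toNNReal _ hδ.le]
    exact hLip n x y
  constructor
  · have heq : (fun ω => Qg (σ ω i) (f ω)) =
        fun ω => ∑ n : Fin N, if σ ω i = n then Qg n (f ω) else 0 := by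
      funext ω
      simp
    rw [heq]
    refine Finset.measurable_sum _ fun n _ => ?_
    refine Measurable.ite ?_ ((hcont n).measurable.comp mf) measurable_const
    exact hσ (by trivial : MeasurableSet[⊤] {π : Equiv.Perm (Fin N) | π i = n})
  · refine ⟨δ * Cf + ∑ n : Fin N, ‖Qg n 0‖, fun ω => ?_⟩
    calc ‖Qg (σ ω i) (f ω)‖ ≤ ‖Qg (σ ω i) (f ω) - Qg (σ ω i) 0‖ + ‖Qg (σ ω i) 0‖ := by
          simpa using norm_add_le (Qg (σ ω i) (f ω) - Qg (σ ω i) 0) (Qg (σ ω i) 0)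
      _ ≤ δ * Cf + ∑ n : Fin N, ‖Qg n 0‖ := by
          refine add_le_add ?_ ?_
          · calc ‖Qg (σ ω i) (f ω) - Qg (σ ω i) 0‖ ≤ δ * ‖f ω - 0‖ := hLip _ _ _
              _ = δ * ‖f ω‖ := by rw [sub_zero]
              _ ≤ δ * Cf := mul_le_mul_of_nonneg_left (hCf ω) hδ.le
          · exact Finset.single_le_sum (f := fun n => ‖Qg n 0‖)
              (fun n _ => norm_nonneg _) (Finset.mem_univ _)

theorem integrable_sq_norm_sub {f h : Ω → EuclideanSpace ℝ (Fin M)}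
    (hf : AvrgNice f) (hh : AvrgNice h) (P : Measure Ω) [IsProbabilityMeasure P] :
    Integrable (fun ω => ‖f ω - h ω‖ ^ 2) P := by
  obtain ⟨msub, C, hC⟩ := hf.sub hh
  refine Integrable.mono' (integrable_const (C ^ 2)) ?_ ?_
  · exact ((msub.norm.pow_const 2)).aestronglyMeasurable
  · refine Filter.Eventually.of_forall fun ω => ?_
    rw [Real.norm_eq_abs, abs_of_nonneg (by positivity)]
    exact pow_le_pow_left₀ (norm_nonneg _) (hC ω) 2

end AvrgNice

theorem stmt_9
    {M N : ℕ} (hM : 1 ≤ M) (hN : 1 ≤ N)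
    {Ω : Type} [MeasurableSpace Ω] (P : Measure Ω) [IsProbabilityMeasure P]
    (σp : ℕ → Ω → Equiv.Perm (Fin N))
    (hσmeas : ∀ t, @Measurable Ω (Equiv.Perm (Fin N)) _ ⊤ (σp t))
    (hσunif : ∀ t (π : Equiv.Perm (Fin N)),
      P {ω | σp t ω = π} = ((Nat.factorial N : ℝ≥0∞))⁻¹)
    (hσindep : @iIndepFun Ω ℕ _ (fun _ => Equiv.Perm (Fin N)) (fun _ : ℕ => (⊤ : MeasurableSpace (Equiv.Perm (Fin N)))) σp P)
    (Q : Fin N → EuclideanSpace ℝ (Fin M) → ℝ)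
    (Qg : Fin N → EuclideanSpace ℝ (Fin M) → EuclideanSpace ℝ (Fin M))
    (δ ν : ℝ) (hδ : 0 < δ) (hν : 0 < ν)
    (hQdiff : ∀ n x, HasGradientAt (Q n) (Qg n x) x)
    (hQconv : ∀ n, ConvexOn ℝ Set.univ (Q n))
    (hLip : ∀ n x y, ‖Qg n x - Qg n y‖ ≤ δ * ‖x - y‖)
    (hSC : ∀ x y : EuclideanSpace ℝ (Fin M),
      ν * ‖x - y‖ ^ 2 ≤ ⟪((N : ℝ)⁻¹ • ∑ n, Qg n x) - ((N : ℝ)⁻¹ • ∑ n, Qg n y), x - y⟫)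
    (wstar : EuclideanSpace ℝ (Fin M))
    (hstar : ∑ n, Qg n wstar = 0)
    (μ : ℝ) (hμpos : 0 < μ)
    (w : ℕ → ℕ → Ω → EuclideanSpace ℝ (Fin M))
    (g : ℕ → Ω → EuclideanSpace ℝ (Fin M))
    (hw00 : ∀ ω, w 0 0 ω = 0)
    (hg0 : ∀ ω, g 0 ω = 0)
    (hwrec : ∀ (t : ℕ) (i : Fin N) (ω : Ω),
      w t ((i : ℕ) + 1) ω = w t (i : ℕ) ω - μ •
        (Qg (σp t ω i) (w t (i : ℕ) ω) - Qg (σp t ω i) (w t 0 ω) + g t ω))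
    (hgrec : ∀ (t : ℕ) (ω : Ω),
      g (t + 1) ω = (N : ℝ)⁻¹ • ∑ i : Fin N, Qg (σp t ω i) (w t (i : ℕ) ω))
    (hwepoch : ∀ (t : ℕ) (ω : Ω), w (t + 1) 0 ω = w t N ω)
    :
    -- AVRG backward inner-difference bound.
    ∀ t : ℕ, 1 ≤ t →
      ∑ i ∈ Finset.range N, ∫ ω, ‖w t N ω - w t i ω‖ ^ 2 ∂P ≤
        3 * μ ^ 2 * δ ^ 2 * N ^ 2 *
            (∑ i ∈ Finset.range N, ∫ ω, ‖w t i ω - w t 0 ω‖ ^ 2 ∂P) +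
          3 * μ ^ 2 * δ ^ 2 * N ^ 2 *
            ((∑ i ∈ Finset.range N, ∫ ω, ‖w (t - 1) i ω - w (t - 1) N ω‖ ^ 2 ∂P) +
              N * ∫ ω, ‖wstar - w t 0 ω‖ ^ 2 ∂P) := by
  intro t ht
  obtain ⟨s, rfl⟩ : ∃ s, t = s + 1 := ⟨t - 1, (Nat.succ_pred_eq_of_pos ht).symm⟩
  simp only [Nat.add_sub_cancel]
  have hN0 : (0:ℝ) < N := by exact_mod_cast hN
  have hNne : (N:ℝ) ≠ 0 := ne_of_gt hN0
  -- Niceness of the iterates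
  have inner : ∀ u : ℕ, AvrgNice (g u) → AvrgNice (fun ω => w u 0 ω) →
      ∀ i, i ≤ N → AvrgNice (fun ω => w u i ω) := by
    intro u hg h0 i
    induction i with
    | zero => intro _; exact h0
    | succ i ih =>
      intro hi
      have hi' : i < N := hi
      have hwi := ih hi'.le
      have heq : (fun ω => w u (i+1) ω) = fun ω =>
          w u i ω - μ • (Qg (σp u ω ⟨i, hi'⟩) (w u i ω)
            - Qg (σp u ω ⟨i, hi'⟩) (w u 0 ω) + g u ω) := by
        funext ω; exact hwrec u ⟨i, hi'⟩ ω
      rw [heq]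
      exact hwi.sub (AvrgNice.smul μ
        (((AvrgNice.qg_comp (σp u) (hσmeas u) Qg δ hδ hLip ⟨i,hi'⟩ hwi).sub
          (AvrgNice.qg_comp (σp u) (hσmeas u) Qg δ hδ hLip ⟨i,hi'⟩ h0)).add hg))
  have key : ∀ u : ℕ, AvrgNice (g u) ∧ ∀ i, i ≤ N → AvrgNice (fun ω => w u i ω) := by
    intro u
    induction u with
    | zero =>
      have hg : AvrgNice (g 0) := by
        have h : g 0 = fun _ : Ω => (0 : EuclideanSpace ℝ (Fin M)) := funext hg0
        rw [h]; exact AvrgNice.const 0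
      have h0 : AvrgNice (fun ω => w 0 0 ω) := by
        have h : (fun ω => w 0 0 ω) = fun _ : Ω => (0 : EuclideanSpace ℝ (Fin M)) :=
          funext hw00
        rw [h]; exact AvrgNice.const 0
      exact ⟨hg, inner 0 hg h0⟩
    | succ u ih =>
      have h0 : AvrgNice (fun ω => w (u+1) 0 ω) := by
        have h : (fun ω => w (u+1) 0 ω) = fun ω => w u N ω := funext (hwepoch u)
        rw [h]; exact ih.2 N le_rfl
      have hg : AvrgNice (g (u+1)) := by
        have h : g (u+1) = fun ω => (N:ℝ)⁻¹ • ∑ i : Fin N, Qg (σp u ω i) (w u (i:ℕ) ω) :=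
          funext (hgrec u)
        rw [h]
        exact AvrgNice.smul _ (AvrgNice.finset_sum Finset.univ fun i _ =>
          AvrgNice.qg_comp (σp u) (hσmeas u) Qg δ hδ hLip i (ih.2 i i.isLt.le))
      exact ⟨hg, inner (u+1) hg h0⟩
  have int2 : ∀ (u i j : ℕ), i ≤ N → j ≤ N →
      Integrable (fun ω => ‖w u i ω - w u j ω‖^2) P :=
    fun u i j hi hj => AvrgNice.integrable_sq_norm_sub ((key u).2 i hi) ((key u).2 j hj) P
  have intc : Integrable (fun ω => ‖wstar - w (s+1) 0 ω‖^2) P :=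
    AvrgNice.integrable_sq_norm_sub (AvrgNice.const wstar) ((key (s+1)).2 0 (Nat.zero_le N)) P
  -- Pointwise bound
  have pw : ∀ ω, ∑ i ∈ range N, ‖w (s+1) N ω - w (s+1) i ω‖^2 ≤
      3*μ^2*δ^2*(N:ℝ)^2 * (∑ i ∈ range N, ‖w (s+1) i ω - w (s+1) 0 ω‖^2)
      + 3*μ^2*δ^2*(N:ℝ)^2 * ((∑ i ∈ range N, ‖w s i ω - w s N ω‖^2)
          + (N:ℝ) * ‖wstar - w (s+1) 0 ω‖^2) := by
    intro ω
    set A : ℝ := ∑ j ∈ range N, ‖w (s+1) j ω - w (s+1) 0 ω‖ with hA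
    set B : ℝ := ∑ k ∈ range N, ‖w s k ω - w s N ω‖ with hB
    set c : ℝ := ‖wstar - w (s+1) 0 ω‖ with hc
    set SA : ℝ := ∑ i ∈ range N, ‖w (s+1) i ω - w (s+1) 0 ω‖^2 with hSA
    set SB : ℝ := ∑ i ∈ range N, ‖w s i ω - w s N ω‖^2 with hSB
    -- bound on the amortized gradient
    have hperm : ∑ i : Fin N, Qg (σp s ω i) (w s N ω) = ∑ n : Fin N, Qg n (w s N ω) :=
      Equiv.sum_comp (σp s ω) (fun n => Qg n (w s N ω))
    have hsplit : ∑ i : Fin N, Qg (σp s ω i) (w s (i:ℕ) ω)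
        = (∑ i : Fin N, (Qg (σp s ω i) (w s (i:ℕ) ω) - Qg (σp s ω i) (w s N ω)))
          + ∑ n : Fin N, (Qg n (w s N ω) - Qg n wstar) := by
      rw [Finset.sum_sub_distrib, Finset.sum_sub_distrib, hstar, sub_zero, hperm]
      abel
    have hwN0 : w s N ω = w (s+1) 0 ω := (hwepoch s ω).symm
    have hG : ‖g (s+1) ω‖ ≤ δ * ((N:ℝ)⁻¹ * B) + δ * c := by
      rw [hgrec s ω, hsplit, norm_smul]
      have h1 : ‖(∑ i : Fin N, (Qg (σp s ω i) (w s (i:ℕ) ω) - Qg (σp s ω i) (w s N ω)))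
          + ∑ n : Fin N, (Qg n (w s N ω) - Qg n wstar)‖ ≤ δ * B + (N:ℝ) * (δ * c) := by
        refine (norm_add_le _ _).trans (add_le_add ?_ ?_)
        · calc ‖∑ i : Fin N, (Qg (σp s ω i) (w s (i:ℕ) ω) - Qg (σp s ω i) (w s N ω))‖
              ≤ ∑ i : Fin N, ‖Qg (σp s ω i) (w s (i:ℕ) ω) - Qg (σp s ω i) (w s N ω)‖ :=
                norm_sum_le _ _
            _ ≤ ∑ i : Fin N, δ * ‖w s (i:ℕ) ω - w s N ω‖ :=
                Finset.sum_le_sum fun i _ => hLip _ _ _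
            _ = δ * B := by
                rw [← Finset.mul_sum, hB,
                  Fin.sum_univ_eq_sum_range (fun k => ‖w s k ω - w s N ω‖) N]
        · calc ‖∑ n : Fin N, (Qg n (w s N ω) - Qg n wstar)‖
              ≤ ∑ n : Fin N, ‖Qg n (w s N ω) - Qg n wstar‖ := norm_sum_le _ _
            _ ≤ ∑ _n : Fin N, δ * c := by
                refine Finset.sum_le_sum fun n _ => ?_
                calc ‖Qg n (w s N ω) - Qg n wstar‖ ≤ δ * ‖w s N ω - wstar‖ := hLip _ _ _
                  _ = δ * c := by rw [hwN0, norm_sub_rev]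
            _ = (N:ℝ) * (δ * c) := by
                rw [Finset.sum_const, Finset.card_univ, Fintype.card_fin, nsmul_eq_mul]
      calc ‖(N:ℝ)⁻¹‖ * ‖(∑ i : Fin N, (Qg (σp s ω i) (w s (i:ℕ) ω)
              - Qg (σp s ω i) (w s N ω))) + ∑ n : Fin N, (Qg n (w s N ω) - Qg n wstar)‖
          ≤ (N:ℝ)⁻¹ * (δ * B + (N:ℝ) * (δ * c)) := by
            rw [Real.norm_eq_abs, abs_of_nonneg (by positivity)]
            exact mul_le_mul_of_nonneg_left h1 (by positivity)
        _ = δ * ((N:ℝ)⁻¹ * B) + δ * c := by field_simp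
    -- one-step bound
    have hstep : ∀ j : Fin N, ‖w (s+1) ((j:ℕ)+1) ω - w (s+1) (j:ℕ) ω‖ ≤
        μ * (δ * ‖w (s+1) (j:ℕ) ω - w (s+1) 0 ω‖ + ‖g (s+1) ω‖) := by
      intro j
      have hd : w (s+1) ((j:ℕ)+1) ω - w (s+1) (j:ℕ) ω =
          -(μ • (Qg (σp (s+1) ω j) (w (s+1) (j:ℕ) ω)
            - Qg (σp (s+1) ω j) (w (s+1) 0 ω) + g (s+1) ω)) := by
        rw [hwrec (s+1) j ω]; abel
      rw [hd, norm_neg, norm_smul, Real.norm_eq_abs, abs_of_pos hμpos]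
      refine mul_le_mul_of_nonneg_left ?_ hμpos.le
      exact (norm_add_le _ _).trans (add_le_add (hLip _ _ _) le_rfl)
    -- telescoping
    have htele : ∀ i, i ≤ N → w (s+1) N ω - w (s+1) i ω =
        ∑ j ∈ Finset.Ico i N, (w (s+1) (j+1) ω - w (s+1) j ω) := by
      intro i hi
      rw [Finset.sum_Ico_eq_sub _ hi, Finset.sum_range_sub (fun j => w (s+1) j ω),
        Finset.sum_range_sub (fun j => w (s+1) j ω)]
      abel
    have hnorm : ∀ i, i ≤ N → ‖w (s+1) N ω - w (s+1) i ω‖ ≤ μ * δ * (A + B + (N:ℝ) * c) := by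
      intro i hi
      have h1 : ‖w (s+1) N ω - w (s+1) i ω‖
          ≤ ∑ j ∈ Finset.range N, ‖w (s+1) (j+1) ω - w (s+1) j ω‖ := by
        rw [htele i hi]
        refine (norm_sum_le _ _).trans ?_
        refine Finset.sum_le_sum_of_subset_of_nonneg ?_ (fun _ _ _ => norm_nonneg _)
        intro x hx
        exact Finset.mem_range.mpr (Finset.mem_Ico.mp hx).2
      have h2 : ∑ j ∈ Finset.range N, ‖w (s+1) (j+1) ω - w (s+1) j ω‖
          ≤ ∑ j ∈ Finset.range N,
              μ * (δ * ‖w (s+1) j ω - w (s+1) 0 ω‖ + ‖g (s+1) ω‖) :=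
        Finset.sum_le_sum fun j hj => hstep ⟨j, Finset.mem_range.mp hj⟩
      have h3 : ∑ j ∈ Finset.range N,
          μ * (δ * ‖w (s+1) j ω - w (s+1) 0 ω‖ + ‖g (s+1) ω‖)
          = μ * δ * A + (N:ℝ) * (μ * ‖g (s+1) ω‖) := by
        simp only [mul_add, Finset.sum_add_distrib, ← Finset.mul_sum, Finset.sum_const,
          Finset.card_range, nsmul_eq_mul, hA]
        ring
      have h4 : (N:ℝ) * (μ * ‖g (s+1) ω‖) ≤ (N:ℝ) * (μ * (δ * ((N:ℝ)⁻¹ * B) + δ * c)) := by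
        refine mul_le_mul_of_nonneg_left ?_ hN0.le
        exact mul_le_mul_of_nonneg_left hG hμpos.le
      have h5 : μ * δ * A + (N:ℝ) * (μ * (δ * ((N:ℝ)⁻¹ * B) + δ * c))
          = μ * δ * (A + B + (N:ℝ) * c) := by field_simp; ring
      linarith [h1.trans h2]
    -- assemble
    have hsqsum : ∑ i ∈ range N, ‖w (s+1) N ω - w (s+1) i ω‖^2
        ≤ (N:ℝ) * (μ * δ * (A + B + (N:ℝ) * c))^2 := by
      calc ∑ i ∈ range N, ‖w (s+1) N ω - w (s+1) i ω‖^2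
          ≤ ∑ _i ∈ range N, (μ * δ * (A + B + (N:ℝ) * c))^2 :=
            Finset.sum_le_sum fun i hi =>
              pow_le_pow_left₀ (norm_nonneg _) (hnorm i (Finset.mem_range.mp hi).le) 2
        _ = (N:ℝ) * (μ * δ * (A + B + (N:ℝ) * c))^2 := by
            rw [Finset.sum_const, Finset.card_range, nsmul_eq_mul]
    have hA2 : A^2 ≤ (N:ℝ) * SA := by
      have := sq_sum_le_card_mul_sum_sq
        (s := range N) (f := fun j => ‖w (s+1) j ω - w (s+1) 0 ω‖)
      simpa [Finset.card_range, hA, hSA] using this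
    have hB2 : B^2 ≤ (N:ℝ) * SB := by
      have := sq_sum_le_card_mul_sum_sq
        (s := range N) (f := fun k => ‖w s k ω - w s N ω‖)
      simpa [Finset.card_range, hB, hSB] using this
    have h3 : (A + B + (N:ℝ)*c)^2 ≤ 3*(A^2 + B^2 + ((N:ℝ)*c)^2) := by
      nlinarith [sq_nonneg (A - B), sq_nonneg (A - (N:ℝ)*c), sq_nonneg (B - (N:ℝ)*c)]
    refine hsqsum.trans ?_
    calc (N:ℝ) * (μ * δ * (A + B + (N:ℝ) * c))^2
        = μ^2*δ^2*(N:ℝ) * (A + B + (N:ℝ)*c)^2 := by ring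
      _ ≤ μ^2*δ^2*(N:ℝ) * (3*(A^2 + B^2 + ((N:ℝ)*c)^2)) :=
          mul_le_mul_of_nonneg_left h3 (by positivity)
      _ ≤ μ^2*δ^2*(N:ℝ) * (3*(((N:ℝ)*SA) + ((N:ℝ)*SB) + ((N:ℝ)*c)^2)) := by
          refine mul_le_mul_of_nonneg_left ?_ (by positivity)
          linarith
      _ = 3*μ^2*δ^2*(N:ℝ)^2 * SA + 3*μ^2*δ^2*(N:ℝ)^2 * (SB + (N:ℝ) * c^2) := by ring
  -- integrate
  have intNi : ∀ i ∈ range N, Integrable (fun ω => ‖w (s+1) N ω - w (s+1) i ω‖^2) P :=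
    fun i hi => int2 (s+1) N i le_rfl (Finset.mem_range.mp hi).le
  have intA : ∀ i ∈ range N, Integrable (fun ω => ‖w (s+1) i ω - w (s+1) 0 ω‖^2) P :=
    fun i hi => int2 (s+1) i 0 (Finset.mem_range.mp hi).le (Nat.zero_le N)
  have intB : ∀ i ∈ range N, Integrable (fun ω => ‖w s i ω - w s N ω‖^2) P :=
    fun i hi => int2 s i N (Finset.mem_range.mp hi).le le_rfl
  have I1 : Integrable (fun ω => ∑ i ∈ range N, ‖w (s+1) N ω - w (s+1) i ω‖^2) P :=
    integrable_finset_sum _ intNi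
  have IA : Integrable (fun ω => ∑ i ∈ range N, ‖w (s+1) i ω - w (s+1) 0 ω‖^2) P :=
    integrable_finset_sum _ intA
  have IB : Integrable (fun ω => ∑ i ∈ range N, ‖w s i ω - w s N ω‖^2) P :=
    integrable_finset_sum _ intB
  have IR : Integrable (fun ω =>
      3*μ^2*δ^2*(N:ℝ)^2 * (∑ i ∈ range N, ‖w (s+1) i ω - w (s+1) 0 ω‖^2)
      + 3*μ^2*δ^2*(N:ℝ)^2 * ((∑ i ∈ range N, ‖w s i ω - w s N ω‖^2)
          + (N:ℝ) * ‖wstar - w (s+1) 0 ω‖^2)) P :=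
    (IA.const_mul _).add ((IB.add (intc.const_mul _)).const_mul _)
  have hmono := integral_mono I1 IR pw
  rw [← integral_finset_sum _ intNi]
  refine hmono.trans (le_of_eq ?_)
  have IZ : Integrable (fun ω => (N:ℝ) * ‖wstar - w (s+1) 0 ω‖^2) P := intc.const_mul _
  have I2' : Integrable (fun ω => (∑ i ∈ range N, ‖w s i ω - w s N ω‖^2)
      + (N:ℝ) * ‖wstar - w (s+1) 0 ω‖^2) P := IB.add IZ
  have IRa : Integrable (fun ω =>
      3*μ^2*δ^2*(N:ℝ)^2 * (∑ i ∈ range N, ‖w (s+1) i ω - w (s+1) 0 ω‖^2)) P :=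
    IA.const_mul _
  have IRb : Integrable (fun ω =>
      3*μ^2*δ^2*(N:ℝ)^2 * ((∑ i ∈ range N, ‖w s i ω - w s N ω‖^2)
        + (N:ℝ) * ‖wstar - w (s+1) 0 ω‖^2)) P := I2'.const_mul _
  rw [integral_add IRa IRb, integral_const_mul _ _, integral_const_mul _ _,
    integral_finset_sum _ intA, integral_add IB IZ, integral_finset_sum _ intB,
    integral_const_mul _ _]
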